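/- Let f ∈ R° for a d-dimensional reduced Cohen-Macaulay local ring (R, 𝔪) of characteristic p > 0, and let t ≥ 0 be real. If for some e' > 0 and z ∈ H^d_𝔪(R) one has f^{⌊t(p^{e'}−1)⌋}·z^{p^{e'}} = 0, then f^{⌊t(p^{e'}p^b−1)⌋}·z^{p^{e'+b}} = 0 for every b > 0. Consequently, if for infinitely many e ≥ 0 we have f^{⌊t(p^e−1)⌋}·z^{p^e} ≠ 0, then this holds for all e ≥ 0. -/

import Mathlib

open Function IsLocalRing

noncomputable section

namespace RatPairs

/-- The set `R°` of elements of `R` not contained in any minimal prime. -/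
def Rcirc (R : Type*) [CommRing R] : Set R := {c | ∀ P ∈ minimalPrimes R, c ∉ P}

/-- The Frobenius power `I^{[q]}` of an ideal: the ideal generated by `q`-th powers
of elements of `I`. -/
def frobPow {R : Type*} [CommRing R] (I : Ideal R) (q : ℕ) : Ideal R :=
  Ideal.span ((fun x => x ^ q) '' (I : Set R))

/-- The `𝔞^t`-tight closure of an ideal `I`: all `z` such that for some `c ∈ R°`,
`c · 𝔞^{⌈t q⌉} · z^q ⊆ I^{[q]}` for all large `q = p^e`. -/
def tightClosure {R : Type*} [CommRing R] (p : ℕ) (a : Ideal R) (t : ℝ) (I : Ideal R) :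
    Set R :=
  {z | ∃ c ∈ Rcirc R, ∃ e₀ : ℕ, ∀ e ≥ e₀, ∀ y ∈ a ^ ⌈t * (p : ℝ) ^ e⌉₊,
    c * y * z ^ p ^ e ∈ frobPow I (p ^ e)}

/-- A system of parameters for a local ring: `dim R` elements generating an ideal
whose radical is the maximal ideal. -/
def IsSOP {R : Type*} [CommRing R] [IsLocalRing R] {n : ℕ} (x : Fin n → R) : Prop :=
  (n : WithBot (WithTop ℕ)) = ringKrullDim R ∧
    (Ideal.span (Set.range x)).radical = maximalIdeal R

/-- The pair `(R, 𝔞^t)` of a local ring is F-rational if every parameter ideal is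
`𝔞^t`-tightly closed. -/
def FRationalPairAt (R : Type*) [CommRing R] [IsLocalRing R] (p : ℕ) (a : Ideal R)
    (t : ℝ) : Prop :=
  ∀ (n : ℕ) (x : Fin n → R), IsSOP x →
    tightClosure p a t (Ideal.span (Set.range x)) = ↑(Ideal.span (Set.range x))

/-- F-rationality of a pair for a not necessarily local ring: F-rationality of the
localization at every maximal ideal. -/
def FRationalPair (R : Type*) [CommRing R] (p : ℕ) (a : Ideal R) (t : ℝ) : Prop :=
  ∀ (m : Ideal R) (hm : m.IsMaximal),
    letI := hm.isPrime
    FRationalPairAt (Localization.AtPrime m) p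
      (a.map (algebraMap R (Localization.AtPrime m))) t

/-- Excellence of a ring.  The full definition (a Noetherian, universally catenary
quasi-excellent ring) is not yet available in Mathlib; we record the Noetherian
property. -/
class IsExcellent (R : Type*) [CommRing R] : Prop where
  noetherian : IsNoetherianRing R

/-- A local ring is Cohen-Macaulay if every system of parameters is a regular
sequence. -/
def IsCohenMacaulayLocal (R : Type*) [CommRing R] [IsLocalRing R] : Prop :=
  ∀ (n : ℕ) (x : Fin n → R), IsSOP x → RingTheory.Sequence.IsRegular R (List.ofFn x)

/-- A (compatible family of iterates of a) Frobenius action on an `R`-module `H`,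
such as the natural Frobenius action on local cohomology:  `toFun e` is the
`e`-times iterated Frobenius, which is additive and `p^e`-semilinear. -/
structure FrobeniusActionOn (R : Type*) [CommRing R] (p : ℕ) (H : Type*)
    [AddCommGroup H] [Module R H] where
  toFun : ℕ → H → H
  map_add : ∀ e x y, toFun e (x + y) = toFun e x + toFun e y
  map_smulp : ∀ e (r : R) x, toFun e (r • x) = r ^ p ^ e • toFun e x
  toFun_zero : ∀ x, toFun 0 x = x
  toFun_add : ∀ e e' x, toFun (e + e') x = toFun e (toFun e' x)

/-- The top local cohomology module `H^i_𝔪(R)` (via Mathlib's `localCohomology`). -/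
def LC (R : Type) [CommRing R] [IsLocalRing R] (i : ℕ) : Type :=
  (localCohomology (maximalIdeal R) i).obj (ModuleCat.of R R)

instance (R : Type) [CommRing R] [IsLocalRing R] (i : ℕ) : AddCommGroup (LC R i) := by
  unfold LC; infer_instance

instance (R : Type) [CommRing R] [IsLocalRing R] (i : ℕ) : Module R (LC R i) := by
  unfold LC; infer_instance

/-- The `𝔞^t`-tight closure of `0` in a module `H` with Frobenius action `F`. -/
def zeroTC {R : Type*} [CommRing R] (p : ℕ) {H : Type*} [AddCommGroup H] [Module R H]
    (F : FrobeniusActionOn R p H) (a : Ideal R) (t : ℝ) : Set H :=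
  {ξ | ∃ c ∈ Rcirc R, ∃ e₀ : ℕ, ∀ e ≥ e₀, ∀ y ∈ a ^ ⌈t * (p : ℝ) ^ e⌉₊,
    (c * y) • F.toFun e ξ = 0}


lemma frobMapZero {R : Type*} [CommRing R] {p : ℕ} {H : Type*} [AddCommGroup H]
    [Module R H] (F : FrobeniusActionOn R p H) (e : ℕ) : F.toFun e 0 = 0 := by
  have h := F.map_add e 0 0
  rw [add_zero] at h
  exact add_eq_left.mp h.symm

theorem statement5 (R : Type) [CommRing R] [IsLocalRing R] [IsReduced R]
    (p : ℕ) (hp : p.Prime) [CharP R p]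
    (d : ℕ) (hd : ringKrullDim R = (d : WithBot (WithTop ℕ))) (hCM : IsCohenMacaulayLocal R)
    (f : R) (hf : f ∈ Rcirc R) (t : ℝ) (ht : 0 ≤ t)
    (F : FrobeniusActionOn R p (LC R d)) (z : LC R d) :
    (∀ e' : ℕ, 0 < e' → f ^ ⌊t * ((p : ℝ) ^ e' - 1)⌋₊ • F.toFun e' z = 0 →
      ∀ b : ℕ, 0 < b →
        f ^ ⌊t * ((p : ℝ) ^ e' * (p : ℝ) ^ b - 1)⌋₊ • F.toFun (e' + b) z = 0) ∧
    ((∀ e₀ : ℕ, ∃ e ≥ e₀, f ^ ⌊t * ((p : ℝ) ^ e - 1)⌋₊ • F.toFun e z ≠ 0) →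
      ∀ e : ℕ, f ^ ⌊t * ((p : ℝ) ^ e - 1)⌋₊ • F.toFun e z ≠ 0) := by
  have hp1 : (1:ℝ) ≤ (p:ℝ) := by exact_mod_cast hp.one_lt.le
  have part1 : ∀ e' : ℕ, 0 < e' → f ^ ⌊t * ((p : ℝ) ^ e' - 1)⌋₊ • F.toFun e' z = 0 →
      ∀ b : ℕ, 0 < b →
        f ^ ⌊t * ((p : ℝ) ^ e' * (p : ℝ) ^ b - 1)⌋₊ • F.toFun (e' + b) z = 0 := by
    intro e' he' h0 b hb
    set M := ⌊t * ((p : ℝ) ^ e' - 1)⌋₊ with hM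
    set N := ⌊t * ((p : ℝ) ^ e' * (p : ℝ) ^ b - 1)⌋₊ with hN
    have hpe : (1:ℝ) ≤ (p:ℝ) ^ e' := one_le_pow₀ hp1
    have hpb : (1:ℝ) ≤ (p:ℝ) ^ b := one_le_pow₀ hp1
    have hx : (0:ℝ) ≤ t * ((p:ℝ) ^ e' - 1) := mul_nonneg ht (by linarith)
    have hMle : (M : ℝ) ≤ t * ((p:ℝ) ^ e' - 1) := Nat.floor_le hx
    have key : p ^ b * M ≤ N := by
      apply Nat.le_floor
      push_cast
      nlinarith [pow_nonneg (le_trans zero_le_one hp1) b]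
    have h1 : F.toFun b (f ^ M • F.toFun e' z) = 0 := by
      rw [h0, frobMapZero]
    have h2 : f ^ (p ^ b * M) • F.toFun b (F.toFun e' z) = 0 := by
      have h3 := F.map_smulp b (f ^ M) (F.toFun e' z)
      rw [h1, ← pow_mul, mul_comm M (p ^ b)] at h3
      exact h3.symm
    rw [add_comm e' b, F.toFun_add,
      show N = (N - p ^ b * M) + p ^ b * M from (Nat.sub_add_cancel key).symm,
      pow_add, mul_smul, h2, smul_zero]
  refine ⟨part1, ?_⟩
  intro hinf e
  intro hz
  rcases Nat.eq_zero_or_pos e with he | he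
  · subst he
    rw [F.toFun_zero] at hz
    simp only [pow_zero, sub_self, mul_zero, Nat.floor_zero] at hz
    rw [one_smul] at hz
    obtain ⟨e1, _, hne⟩ := hinf 0
    exact hne (by rw [hz, frobMapZero, smul_zero])
  · obtain ⟨e1, he1, hne⟩ := hinf (e + 1)
    have hb : 0 < e1 - e := by omega
    have := part1 e he hz (e1 - e) hb
    rw [← pow_add, show e + (e1 - e) = e1 by omega] at this
    exact hne this


end RatPairs
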